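/- Let x ∈ ℝ^N be supported on T with |T| ≤ K, let y = Φx, and let T⁰ be a set of K indices maximizing ‖Φ_{T⁰}^* y‖₂ over all sets of size K (in particular ‖Φ_{T⁰}^* y‖₂ ≥ ‖Φ_T^* y‖₂). If Φ satisfies the RIP with constants δ_K, δ_{2K}, then ‖x_{T∩T⁰}‖₂ ≥ ((1 - δ_K - 2δ_{2K})/(1 + δ_K)) ‖x‖₂. -/

import Mathlib

open scoped BigOperators

/-- Squared-sum Euclidean norm of a finite vector. -/
noncomputable def l2norm {ι : Type*} [Fintype ι] (v : ι → ℝ) : ℝ :=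
  Real.sqrt (∑ i, v i ^ 2)

/-- The ℓ₁ norm of a finite vector. -/
noncomputable def l1norm {ι : Type*} [Fintype ι] (v : ι → ℝ) : ℝ :=
  ∑ i, |v i|

/-- `Φ_I q`: the product of the column submatrix `Φ_I` with a coefficient vector `q`. -/
noncomputable def colMul {m N : ℕ} (Φ : Matrix (Fin m) (Fin N) ℝ) (I : Finset (Fin N))
    (q : I → ℝ) : Fin m → ℝ :=
  fun r => ∑ i : I, Φ r i.1 * q i

/-- `Φ_I^* y`: the transpose of the column submatrix applied to `y`. -/
noncomputable def colTMul {m N : ℕ} (Φ : Matrix (Fin m) (Fin N) ℝ) (I : Finset (Fin N))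
    (y : Fin m → ℝ) : I → ℝ :=
  fun i => ∑ r, Φ r i.1 * y r

/-- The Gram matrix `Φ_I^* Φ_I`. -/
noncomputable def gram {m N : ℕ} (Φ : Matrix (Fin m) (Fin N) ℝ) (I : Finset (Fin N)) :
    Matrix I I ℝ :=
  fun i j => ∑ r, Φ r i.1 * Φ r j.1

/-- `Φ` satisfies the restricted isometry property at sparsity `K` with parameter `δ`. -/
def IsRIP {m N : ℕ} (Φ : Matrix (Fin m) (Fin N) ℝ) (K : ℕ) (δ : ℝ) : Prop :=
  ∀ I : Finset (Fin N), I.card ≤ K → ∀ q : I → ℝ,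
    (1 - δ) * ∑ i, q i ^ 2 ≤ ∑ r, (colMul Φ I q r) ^ 2 ∧
      ∑ r, (colMul Φ I q r) ^ 2 ≤ (1 + δ) * ∑ i, q i ^ 2

/-- The RIP constant `δ_K`: the infimum of all admissible RIP parameters. -/
noncomputable def ripConst {m N : ℕ} (Φ : Matrix (Fin m) (Fin N) ℝ) (K : ℕ) : ℝ :=
  sInf {δ : ℝ | 0 ≤ δ ∧ IsRIP Φ K δ}

/-- Projection coefficients `(Φ_I^* Φ_I)⁻¹ Φ_I^* y`. -/
noncomputable def projCoeff {m N : ℕ} (Φ : Matrix (Fin m) (Fin N) ℝ) (I : Finset (Fin N))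
    (y : Fin m → ℝ) : I → ℝ :=
  (gram Φ I)⁻¹.mulVec (colTMul Φ I y)

/-- Orthogonal projection of `y` onto the column span of `Φ_I`. -/
noncomputable def projVec {m N : ℕ} (Φ : Matrix (Fin m) (Fin N) ℝ) (I : Finset (Fin N))
    (y : Fin m → ℝ) : Fin m → ℝ :=
  colMul Φ I (projCoeff Φ I y)

-- Cauchy-Schwarz in sqrt form
lemma cs_sqrt {ι : Type*} [Fintype ι] (f g : ι → ℝ) :
    ∑ i, f i * g i ≤ Real.sqrt (∑ i, f i ^ 2) * Real.sqrt (∑ i, g i ^ 2) := by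
  have h := Finset.sum_mul_sq_le_sq_mul_sq Finset.univ f g
  have h1 : (0:ℝ) ≤ ∑ i, f i ^ 2 := Finset.sum_nonneg fun _ _ => sq_nonneg _
  calc ∑ i, f i * g i ≤ |∑ i, f i * g i| := le_abs_self _
    _ = Real.sqrt ((∑ i, f i * g i)^2) := (Real.sqrt_sq_eq_abs _).symm
    _ ≤ Real.sqrt ((∑ i, f i ^2) * ∑ i, g i ^2) := Real.sqrt_le_sqrt h
    _ = _ := Real.sqrt_mul h1 _

lemma rip_vec {m N : ℕ} (Φ : Matrix (Fin m) (Fin N) ℝ) {K : ℕ} {δ : ℝ}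
    (hΦ : IsRIP Φ K δ) {I : Finset (Fin N)} (hI : I.card ≤ K)
    {v : Fin N → ℝ} (hv : ∀ i, i ∉ I → v i = 0) :
    (1 - δ) * ∑ i, v i ^ 2 ≤ ∑ r, (Φ.mulVec v r) ^ 2 ∧
      ∑ r, (Φ.mulVec v r) ^ 2 ≤ (1 + δ) * ∑ i, v i ^ 2 := by
  have h := hΦ I hI (fun i => v i.1)
  have e1 : ∑ i : I, (v i.1)^2 = ∑ i, v i ^ 2 := by
    rw [Finset.sum_coe_sort I (fun i => v i ^ 2)]
    exact Finset.sum_subset (Finset.subset_univ I)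
      (fun i _ hi => by rw [hv i hi]; ring)
  have e2 : colMul Φ I (fun i => v i.1) = Φ.mulVec v := by
    funext r
    show ∑ i : I, Φ r i.1 * v i.1 = _
    rw [Finset.sum_coe_sort I (fun i => Φ r i * v i)]
    rw [Finset.sum_subset (Finset.subset_univ I)
      (fun i _ hi => by rw [hv i hi]; ring)]
    rfl
  rw [e1, e2] at h
  exact h

lemma expand_sq {ι : Type*} [Fintype ι] (a b : ι → ℝ) :
    ∑ r, (a r + b r)^2 = ∑ r, a r^2 + 2*(∑ r, a r * b r) + ∑ r, b r^2 := by
  rw [Finset.mul_sum, ← Finset.sum_add_distrib, ← Finset.sum_add_distrib]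
  exact Finset.sum_congr rfl fun r _ => by ring

lemma expand_sq' {ι : Type*} [Fintype ι] (a b : ι → ℝ) :
    ∑ r, (a r - b r)^2 = ∑ r, a r^2 - 2*(∑ r, a r * b r) + ∑ r, b r^2 := by
  rw [Finset.mul_sum, ← Finset.sum_sub_distrib, ← Finset.sum_add_distrib]
  exact Finset.sum_congr rfl fun r _ => by ring

lemma inner_half {m N : ℕ} (Φ : Matrix (Fin m) (Fin N) ℝ) {K' : ℕ} {δ : ℝ}
    (hΦ : IsRIP Φ K' δ) {I J : Finset (Fin N)} (hIJ : (I ∪ J).card ≤ K')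
    {u v : Fin N → ℝ} (hu : ∀ i, i ∉ I → u i = 0) (hv : ∀ i, i ∉ J → v i = 0) :
    ∑ r, Φ.mulVec u r * Φ.mulVec v r - ∑ i, u i * v i
      ≤ δ / 2 * (∑ i, u i ^ 2 + ∑ i, v i ^ 2) := by
  have hsupp1 : ∀ i, i ∉ I ∪ J → (u + v) i = 0 := by
    intro i hi
    rw [Finset.mem_union] at hi; push_neg at hi
    simp [hu i hi.1, hv i hi.2]
  have hsupp2 : ∀ i, i ∉ I ∪ J → (u - v) i = 0 := by
    intro i hi
    rw [Finset.mem_union] at hi; push_neg at hi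
    simp [hu i hi.1, hv i hi.2]
  have h1 := (rip_vec Φ hΦ hIJ hsupp1).2
  have h2 := (rip_vec Φ hΦ hIJ hsupp2).1
  rw [Matrix.mulVec_add] at h1
  rw [Matrix.mulVec_sub] at h2
  simp only [Pi.add_apply, Pi.sub_apply] at h1 h2
  rw [expand_sq, expand_sq] at h1
  rw [expand_sq', expand_sq'] at h2
  linarith [h1, h2]

lemma supp_neg {N : ℕ} {J : Finset (Fin N)} {v : Fin N → ℝ}
    (hv : ∀ i, i ∉ J → v i = 0) : ∀ i, i ∉ J → (fun i => -v i) i = 0 := by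
  intro i hi; simp [hv i hi]

lemma sum_sq_zero {ι : Type*} [Fintype ι] {v : ι → ℝ} (h : ∑ i, v i ^ 2 = 0) :
    ∀ i, v i = 0 := by
  intro i
  have := (Finset.sum_eq_zero_iff_of_nonneg (fun j _ => sq_nonneg (v j))).mp h i
    (Finset.mem_univ i)
  exact pow_eq_zero_iff (two_ne_zero) |>.mp this

lemma inner_est {m N : ℕ} (Φ : Matrix (Fin m) (Fin N) ℝ) {K' : ℕ} {δ : ℝ}
    (hΦ : IsRIP Φ K' δ) {I J : Finset (Fin N)} (hIJ : (I ∪ J).card ≤ K')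
    {u v : Fin N → ℝ} (hu : ∀ i, i ∉ I → u i = 0) (hv : ∀ i, i ∉ J → v i = 0) :
    ∑ r, Φ.mulVec u r * Φ.mulVec v r
      ≤ ∑ i, u i * v i
        + δ * Real.sqrt (∑ i, u i ^ 2) * Real.sqrt (∑ i, v i ^ 2) := by
  set U := ∑ i, u i ^ 2 with hU
  set V := ∑ i, v i ^ 2 with hV
  have hUnn : 0 ≤ U := Finset.sum_nonneg fun _ _ => sq_nonneg _
  have hVnn : 0 ≤ V := Finset.sum_nonneg fun _ _ => sq_nonneg _
  by_cases hU0 : U = 0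
  · have hz : ∀ i, u i = 0 := sum_sq_zero hU0
    have : Φ.mulVec u = 0 := by
      funext r; simp [Matrix.mulVec, dotProduct, hz]
    simp [this, hz, hU0]
  by_cases hV0 : V = 0
  · have hz : ∀ i, v i = 0 := sum_sq_zero hV0
    have : Φ.mulVec v = 0 := by
      funext r; simp [Matrix.mulVec, dotProduct, hz]
    simp [this, hz, hV0]
  set a := Real.sqrt U with ha
  set b := Real.sqrt V with hb
  have ha2 : a^2 = U := Real.sq_sqrt hUnn
  have hb2 : b^2 = V := Real.sq_sqrt hVnn
  have hapos : 0 < a := Real.sqrt_pos.mpr (lt_of_le_of_ne hUnn (Ne.symm hU0))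
  have hbpos : 0 < b := Real.sqrt_pos.mpr (lt_of_le_of_ne hVnn (Ne.symm hV0))
  set u' : Fin N → ℝ := fun i => b * u i with hu'
  set v' : Fin N → ℝ := fun i => a * v i with hv'
  have hu's : ∀ i, i ∉ I → u' i = 0 := fun i hi => by simp [hu', hu i hi]
  have hv's : ∀ i, i ∉ J → v' i = 0 := fun i hi => by simp [hv', hv i hi]
  have key := inner_half Φ hΦ hIJ hu's hv's
  have e1 : ∀ r, Φ.mulVec u' r = b * Φ.mulVec u r := by
    intro r
    simp only [Matrix.mulVec, dotProduct, hu', Finset.mul_sum]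
    exact Finset.sum_congr rfl fun i _ => by ring
  have e2 : ∀ r, Φ.mulVec v' r = a * Φ.mulVec v r := by
    intro r
    simp only [Matrix.mulVec, dotProduct, hv', Finset.mul_sum]
    exact Finset.sum_congr rfl fun i _ => by ring
  have e3 : ∑ r, Φ.mulVec u' r * Φ.mulVec v' r
      = a * b * ∑ r, Φ.mulVec u r * Φ.mulVec v r := by
    rw [Finset.mul_sum]
    exact Finset.sum_congr rfl fun r _ => by rw [e1, e2]; ring
  have e4 : ∑ i, u' i * v' i = a * b * ∑ i, u i * v i := by
    rw [Finset.mul_sum]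
    exact Finset.sum_congr rfl fun i _ => by simp [hu', hv']; ring
  have e5 : ∑ i, u' i ^ 2 = b^2 * U := by
    rw [hU, Finset.mul_sum]
    exact Finset.sum_congr rfl fun i _ => by simp [hu']; ring
  have e6 : ∑ i, v' i ^ 2 = a^2 * V := by
    rw [hV, Finset.mul_sum]
    exact Finset.sum_congr rfl fun i _ => by simp [hv']; ring
  rw [e3, e4, e5, e6, ← ha2, ← hb2] at key
  have hab : 0 < a * b := mul_pos hapos hbpos
  have key2 : a * b * ((∑ r, Φ.mulVec u r * Φ.mulVec v r) - ∑ i, u i * v i)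
      ≤ a * b * (δ * (a * b)) := by linarith [key]
  have := (mul_le_mul_iff_right₀ hab).mp key2
  linarith

lemma exists_rip {m N : ℕ} (Φ : Matrix (Fin m) (Fin N) ℝ) (K : ℕ) :
    ∃ δ, 0 ≤ δ ∧ IsRIP Φ K δ := by
  refine ⟨(∑ r, ∑ i, Φ r i ^ 2) + 1, by positivity, ?_⟩
  intro I hI q
  set C := ∑ r, ∑ i, Φ r i ^ 2 with hC
  have hCnn : 0 ≤ C := by positivity
  have hQ : (0:ℝ) ≤ ∑ i, q i ^ 2 := Finset.sum_nonneg fun _ _ => sq_nonneg _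
  have hP : (0:ℝ) ≤ ∑ r, (colMul Φ I q r) ^ 2 :=
    Finset.sum_nonneg fun _ _ => sq_nonneg _
  constructor
  · nlinarith
  · have hstep : ∀ r, (colMul Φ I q r)^2 ≤ (∑ i, Φ r i ^ 2) * (∑ i, q i ^ 2) := by
      intro r
      have hcs := Finset.sum_mul_sq_le_sq_mul_sq (Finset.univ : Finset I)
        (fun i => Φ r i.1) q
      have hmono : ∑ i : I, Φ r i.1 ^ 2 ≤ ∑ i, Φ r i ^ 2 := by
        rw [Finset.sum_coe_sort I (fun i => Φ r i ^ 2)]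
        exact Finset.sum_le_sum_of_subset_of_nonneg (Finset.subset_univ I)
          (fun i _ _ => sq_nonneg _)
      calc (colMul Φ I q r)^2 ≤ (∑ i : I, Φ r i.1 ^2) * ∑ i, q i ^2 := hcs
        _ ≤ (∑ i, Φ r i ^ 2) * ∑ i, q i ^ 2 := by
            exact mul_le_mul_of_nonneg_right hmono hQ
    have := Finset.sum_le_sum (fun r (_ : r ∈ Finset.univ) => hstep r)
    rw [← Finset.sum_mul] at this
    have hC2 : (∑ r, ∑ i, Φ r i ^2) * (∑ i, q i ^2) ≤ (1 + (C+1)) * ∑ i, q i ^2 := by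
      rw [← hC]; nlinarith
    linarith

lemma ripConst_nonneg {m N : ℕ} (Φ : Matrix (Fin m) (Fin N) ℝ) (K : ℕ) :
    0 ≤ ripConst Φ K :=
  le_csInf ((exists_rip Φ K).imp fun δ h => h) (fun δ hδ => hδ.1)

lemma isRIP_ripConst {m N : ℕ} (Φ : Matrix (Fin m) (Fin N) ℝ) (K : ℕ) :
    IsRIP Φ K (ripConst Φ K) := by
  intro I hI q
  set Q := ∑ i, q i ^ 2 with hQdef
  have hQ : (0:ℝ) ≤ Q := Finset.sum_nonneg fun _ _ => sq_nonneg _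
  set P := ∑ r, (colMul Φ I q r) ^ 2 with hPdef
  have hP : (0:ℝ) ≤ P := Finset.sum_nonneg fun _ _ => sq_nonneg _
  have hne : Set.Nonempty {δ : ℝ | 0 ≤ δ ∧ IsRIP Φ K δ} := (exists_rip Φ K).imp fun δ h => h
  have key : ∀ ε : ℝ, 0 < ε → ∃ δ, (0 ≤ δ ∧ IsRIP Φ K δ) ∧ δ < ripConst Φ K + ε := by
    intro ε hε
    obtain ⟨δ, hδS, hδlt⟩ := Real.lt_sInf_add_pos hne hε
    exact ⟨δ, hδS, hδlt⟩
  constructor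
  · refine le_of_forall_pos_le_add ?_
    intro ε hε
    by_cases hQ0 : Q = 0
    · rw [hQ0]; nlinarith
    have hQpos : 0 < Q := lt_of_le_of_ne hQ (Ne.symm hQ0)
    obtain ⟨δ, ⟨hδ0, hδrip⟩, hδlt⟩ := key (ε / Q) (by positivity)
    have h := (hδrip I hI q).1
    rw [← hQdef, ← hPdef] at h
    have : (1 - (ripConst Φ K + ε / Q)) * Q ≤ (1 - δ) * Q := by nlinarith
    have hdiv : (ε / Q) * Q = ε := div_mul_cancel₀ ε hQ0
    nlinarith
  · refine le_of_forall_pos_le_add ?_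
    intro ε hε
    by_cases hQ0 : Q = 0
    · obtain ⟨δ, ⟨hδ0, hδrip⟩, _⟩ := key 1 one_pos
      have h := (hδrip I hI q).2
      rw [← hQdef, ← hPdef] at h
      rw [hQ0] at h ⊢
      nlinarith
    have hQpos : 0 < Q := lt_of_le_of_ne hQ (Ne.symm hQ0)
    obtain ⟨δ, ⟨hδ0, hδrip⟩, hδlt⟩ := key (ε / Q) (by positivity)
    have h := (hδrip I hI q).2
    rw [← hQdef, ← hPdef] at h
    have hdiv : (ε / Q) * Q = ε := div_mul_cancel₀ ε hQ0
    nlinarith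

set_option maxHeartbeats 1000000 in
theorem initialization_capture {m N : ℕ} (Φ : Matrix (Fin m) (Fin N) ℝ) (K : ℕ)
    (x : Fin N → ℝ) (T T0 : Finset (Fin N))
    (hsupp : ∀ i, i ∉ T → x i = 0) (hT : T.card ≤ K)
    (hT0 : T0.card = K)
    (hmax : ∀ S : Finset (Fin N), S.card ≤ K →
      l2norm (colTMul Φ S (Φ.mulVec x)) ≤ l2norm (colTMul Φ T0 (Φ.mulVec x))) :
    (1 - ripConst Φ K - 2 * ripConst Φ (2 * K)) / (1 + ripConst Φ K) * l2norm x ≤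
      l2norm (fun i : (T ∩ T0 : Finset (Fin N)) => x i.1) := by
  classical
  obtain ⟨δ, hδdef⟩ : ∃ δ, ripConst Φ K = δ := ⟨_, rfl⟩
  obtain ⟨δ2, hδ2def⟩ : ∃ δ2, ripConst Φ (2*K) = δ2 := ⟨_, rfl⟩
  have hδ0 : 0 ≤ δ := hδdef ▸ ripConst_nonneg Φ K
  have hδ20 : 0 ≤ δ2 := hδ2def ▸ ripConst_nonneg Φ (2*K)
  have hrip : IsRIP Φ K δ := hδdef ▸ isRIP_ripConst Φ K
  have hrip2 : IsRIP Φ (2*K) δ2 := hδ2def ▸ isRIP_ripConst Φ (2*K)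
  rw [hδdef, hδ2def]
  set y : Fin m → ℝ := Φ.mulVec x with hy
  set g : Fin N → ℝ := fun i => ∑ r, Φ r i * y r with hg
  set a : Fin N → ℝ := fun i => if i ∈ T ∩ T0 then x i else 0 with ha
  set b : Fin N → ℝ := fun i => if i ∈ T ∩ T0 then 0 else x i with hbdef
  set h1 : Fin N → ℝ := fun i => if i ∈ T ∩ T0 then g i else 0 with hh1
  set h2 : Fin N → ℝ := fun i => if i ∈ T0 \ T then g i else 0 with hh2
  set w1 : Fin N → ℝ := fun i => if i ∈ T then g i else 0 with hw1
  -- supports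
  have hax : ∀ i, i ∉ T ∩ T0 → a i = 0 := fun i hi => if_neg hi
  have hbx : ∀ i, i ∉ T \ T0 → b i = 0 := by
    intro i hi
    rw [Finset.mem_sdiff] at hi; push_neg at hi
    by_cases h : i ∈ T ∩ T0
    · exact if_pos h
    · have hiT : i ∉ T := by
        intro hT'
        exact h (Finset.mem_inter.mpr ⟨hT', hi hT'⟩)
      calc b i = x i := if_neg h
        _ = 0 := hsupp i hiT
  have hh1s : ∀ i, i ∉ T ∩ T0 → h1 i = 0 := fun i hi => if_neg hi
  have hh2s : ∀ i, i ∉ T0 \ T → h2 i = 0 := fun i hi => if_neg hi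
  -- cardinalities
  have c1 : ((T ∩ T0) ∪ (T ∩ T0)).card ≤ K := by
    rw [Finset.union_self]
    exact le_trans (Finset.card_le_card (Finset.inter_subset_left)) hT
  have c2 : ((T ∩ T0) ∪ (T \ T0)).card ≤ 2 * K := by
    have hsub : (T ∩ T0) ∪ (T \ T0) ⊆ T :=
      Finset.union_subset (Finset.inter_subset_left) (Finset.sdiff_subset)
    calc ((T ∩ T0) ∪ (T \ T0)).card ≤ T.card := Finset.card_le_card hsub
      _ ≤ K := hT
      _ ≤ 2 * K := by omega
  have c3 : ((T0 \ T) ∪ T).card ≤ 2 * K := by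
    calc ((T0 \ T) ∪ T).card ≤ (T0 \ T).card + T.card := Finset.card_union_le _ _
      _ ≤ T0.card + T.card := by
          have := Finset.card_le_card (Finset.sdiff_subset (s := T0) (t := T))
          omega
      _ ≤ 2 * K := by omega
  -- adjoint identity
  have adj : ∀ w : Fin N → ℝ, ∑ r, Φ.mulVec w r * y r = ∑ i, w i * g i := by
    intro w
    simp only [Matrix.mulVec, dotProduct, Finset.sum_mul]
    rw [Finset.sum_comm]
    refine Finset.sum_congr rfl fun i _ => ?_
    rw [hg, Finset.mul_sum]
    exact Finset.sum_congr rfl fun r _ => by ring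
  -- nonnegativity of the various sums
  have hXnn : (0:ℝ) ≤ ∑ i, x i ^ 2 := Finset.sum_nonneg fun _ _ => sq_nonneg _
  have hH1nn : (0:ℝ) ≤ ∑ i, h1 i ^ 2 := Finset.sum_nonneg fun _ _ => sq_nonneg _
  have hH2nn : (0:ℝ) ≤ ∑ i, h2 i ^ 2 := Finset.sum_nonneg fun _ _ => sq_nonneg _
  obtain ⟨nx, hnx⟩ : ∃ t, Real.sqrt (∑ i, x i ^ 2) = t := ⟨_, rfl⟩
  obtain ⟨na, hna⟩ : ∃ t, Real.sqrt (∑ i, a i ^ 2) = t := ⟨_, rfl⟩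
  obtain ⟨nb, hnb⟩ : ∃ t, Real.sqrt (∑ i, b i ^ 2) = t := ⟨_, rfl⟩
  obtain ⟨nh1, hnh1⟩ : ∃ t, Real.sqrt (∑ i, h1 i ^ 2) = t := ⟨_, rfl⟩
  obtain ⟨nh2, hnh2⟩ : ∃ t, Real.sqrt (∑ i, h2 i ^ 2) = t := ⟨_, rfl⟩
  have hnxnn : 0 ≤ nx := hnx ▸ Real.sqrt_nonneg _
  have hnann : 0 ≤ na := hna ▸ Real.sqrt_nonneg _
  have hnbnn : 0 ≤ nb := hnb ▸ Real.sqrt_nonneg _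
  have hnh1nn : 0 ≤ nh1 := hnh1 ▸ Real.sqrt_nonneg _
  have hnh2nn : 0 ≤ nh2 := hnh2 ▸ Real.sqrt_nonneg _
  have hnxsq : nx ^ 2 = ∑ i, x i ^ 2 := hnx ▸ Real.sq_sqrt hXnn
  have hnh1sq : nh1 ^ 2 = ∑ i, h1 i ^ 2 := hnh1 ▸ Real.sq_sqrt hH1nn
  have hnh2sq : nh2 ^ 2 = ∑ i, h2 i ^ 2 := hnh2 ▸ Real.sq_sqrt hH2nn
  -- x = a + b, so y = Φa + Φb pointwise
  have hxab : x = a + b := by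
    funext i
    simp only [Pi.add_apply, ha, hbdef]
    split_ifs <;> ring
  have yab : ∀ r, y r = Φ.mulVec a r + Φ.mulVec b r := by
    intro r
    rw [hy, hxab, Matrix.mulVec_add]
    rfl
  -- nb ≤ nx
  have hnbx : nb ≤ nx := by
    rw [← hnb, ← hnx]
    apply Real.sqrt_le_sqrt
    apply Finset.sum_le_sum
    intro i _
    simp only [hbdef]
    split_ifs
    · simpa using sq_nonneg (x i)
    · exact le_rfl
  -- h1 bound
  have sum_h1g : ∑ i, h1 i * g i = ∑ i, h1 i ^ 2 := by
    refine Finset.sum_congr rfl fun i _ => ?_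
    simp only [hh1]
    split_ifs <;> ring
  have sum_h1b : ∑ i, h1 i * b i = 0 := by
    apply Finset.sum_eq_zero
    intro i _
    simp only [hh1, hbdef]
    split_ifs <;> ring
  have split_h1 : ∑ i, h1 i ^ 2
      = (∑ r, Φ.mulVec h1 r * Φ.mulVec a r) + ∑ r, Φ.mulVec h1 r * Φ.mulVec b r := by
    rw [← sum_h1g, ← adj h1, ← Finset.sum_add_distrib]
    refine Finset.sum_congr rfl fun r _ => ?_
    rw [yab r]; ring
  have est_h1a := inner_est Φ hrip c1 hh1s hax
  have est_h1b := inner_est Φ hrip2 c2 hh1s hbx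
  rw [hnh1, hna] at est_h1a
  rw [hnh1, hnb, sum_h1b] at est_h1b
  have cs_h1a : ∑ i, h1 i * a i ≤ nh1 * na := by
    have := cs_sqrt h1 a
    rwa [hnh1, hna] at this
  have Ih1 : ∑ i, h1 i ^ 2 ≤ nh1 * ((1+δ) * na + δ2 * nb) := by
    rw [split_h1]
    linarith [est_h1a, est_h1b, cs_h1a]
  have bnd_h1 : nh1 ≤ (1+δ) * na + δ2 * nb := by
    rcases eq_or_lt_of_le hnh1nn with h0 | hpos
    · rw [← h0]; positivity
    · have e : nh1 * nh1 ≤ nh1 * ((1+δ) * na + δ2 * nb) := by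
        calc nh1 * nh1 = nh1 ^ 2 := by ring
          _ = ∑ i, h1 i ^ 2 := hnh1sq
          _ ≤ _ := Ih1
      exact (mul_le_mul_iff_right₀ hpos).mp e
  -- h2 bound
  have sum_h2g : ∑ i, h2 i * g i = ∑ i, h2 i ^ 2 := by
    refine Finset.sum_congr rfl fun i _ => ?_
    simp only [hh2]
    split_ifs <;> ring
  have sum_h2x : ∑ i, h2 i * x i = 0 := by
    apply Finset.sum_eq_zero
    intro i _
    by_cases h : i ∈ T0 \ T
    · have hx0 : x i = 0 := hsupp i (Finset.mem_sdiff.mp h).2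
      simp only [hh2, hx0, mul_zero]
    · simp only [hh2, if_neg h, zero_mul]
  have est_h2 := inner_est Φ hrip2 c3 hh2s hsupp
  rw [hnh2, hnx, sum_h2x] at est_h2
  have Ih2 : ∑ i, h2 i ^ 2 ≤ δ2 * nh2 * nx := by
    have e : ∑ i, h2 i ^ 2 = ∑ r, Φ.mulVec h2 r * Φ.mulVec x r := by
      rw [← sum_h2g, ← adj h2]
    rw [e]
    linarith [est_h2]
  have bnd_h2 : nh2 ≤ δ2 * nx := by
    rcases eq_or_lt_of_le hnh2nn with h0 | hpos
    · rw [← h0]; positivity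
    · have e : nh2 * nh2 ≤ nh2 * (δ2 * nx) := by
        calc nh2 * nh2 = nh2 ^ 2 := by ring
          _ = ∑ i, h2 i ^ 2 := hnh2sq
          _ ≤ δ2 * nh2 * nx := Ih2
          _ = nh2 * (δ2 * nx) := by ring
      exact (mul_le_mul_iff_right₀ hpos).mp e
  -- lower bound
  have hlow : (1-δ) * ∑ i, x i ^ 2 ≤ ∑ r, y r ^ 2 := by
    have h := (rip_vec Φ hrip hT hsupp).1
    exact h
  have sum_y2 : ∑ r, y r ^ 2 = ∑ i, x i * g i := by
    rw [← adj x]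
    refine Finset.sum_congr rfl fun r _ => ?_
    rw [hy]; ring
  have sum_xg : ∑ i, x i * g i = ∑ i, x i * w1 i := by
    refine Finset.sum_congr rfl fun i _ => ?_
    by_cases h : i ∈ T
    · simp only [hw1, if_pos h]
    · simp only [hw1, if_neg h, hsupp i h, zero_mul]
  have cs_x : ∑ i, x i * w1 i ≤ nx * Real.sqrt (∑ i, w1 i ^ 2) := by
    have := cs_sqrt x w1
    rwa [hnx] at this
  -- relate l2norms of colTMul to sums of g²
  have hnormS : ∀ S : Finset (Fin N),
      l2norm (colTMul Φ S y) = Real.sqrt (∑ i ∈ S, g i ^ 2) := by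
    intro S
    unfold l2norm colTMul
    congr 1
    rw [← Finset.sum_coe_sort S (fun i => g i ^ 2)]
  have hw1T : ∑ i, w1 i ^ 2 = ∑ i ∈ T, g i ^ 2 := by
    calc ∑ i, w1 i ^ 2 = ∑ i, if i ∈ T then g i ^ 2 else 0 :=
          Finset.sum_congr rfl fun i _ => by simp only [hw1]; split_ifs <;> ring
      _ = ∑ i ∈ Finset.univ ∩ T, g i ^ 2 := Finset.sum_ite_mem _ _ _
      _ = ∑ i ∈ T, g i ^ 2 := by rw [Finset.univ_inter]
  have hmaxT := hmax T hT
  rw [hnormS T, hnormS T0] at hmaxT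
  -- split of the T0 correlation energy
  have hsplit : ∑ i ∈ T0, g i ^ 2 = (∑ i, h1 i ^ 2) + ∑ i, h2 i ^ 2 := by
    rw [← Finset.sum_add_distrib]
    calc ∑ i ∈ T0, g i ^ 2 = ∑ i ∈ Finset.univ ∩ T0, g i ^ 2 := by
          rw [Finset.univ_inter]
      _ = ∑ i, if i ∈ T0 then g i ^ 2 else 0 := (Finset.sum_ite_mem _ _ _).symm
      _ = ∑ i, (h1 i ^ 2 + h2 i ^ 2) := by
          refine Finset.sum_congr rfl fun i _ => ?_
          simp only [hh1, hh2]
          by_cases h0 : i ∈ T0 <;> by_cases hTi : i ∈ T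
          · rw [if_pos h0, if_pos (Finset.mem_inter.mpr ⟨hTi, h0⟩),
              if_neg (fun hc => (Finset.mem_sdiff.mp hc).2 hTi)]
            ring
          · rw [if_pos h0, if_neg (fun hc => hTi (Finset.mem_inter.mp hc).1),
              if_pos (Finset.mem_sdiff.mpr ⟨h0, hTi⟩)]
            ring
          · rw [if_neg h0, if_neg (fun hc => h0 (Finset.mem_inter.mp hc).2),
              if_neg (fun hc => h0 (Finset.mem_sdiff.mp hc).1)]
            ring
          · rw [if_neg h0, if_neg (fun hc => h0 (Finset.mem_inter.mp hc).2),
              if_neg (fun hc => h0 (Finset.mem_sdiff.mp hc).1)]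
            ring
  have hM : Real.sqrt (∑ i ∈ T0, g i ^ 2) ≤ nh1 + nh2 := by
    rw [hsplit]
    have hle : (∑ i, h1 i ^ 2) + ∑ i, h2 i ^ 2 ≤ (nh1 + nh2)^2 := by
      linarith [hnh1sq, hnh2sq, mul_nonneg hnh1nn hnh2nn]
    calc Real.sqrt ((∑ i, h1 i ^ 2) + ∑ i, h2 i ^ 2)
        ≤ Real.sqrt ((nh1 + nh2)^2) := Real.sqrt_le_sqrt hle
      _ = nh1 + nh2 := Real.sqrt_sq (by positivity)
  -- combine everything
  have main : (1-δ) * nx ^ 2 ≤ nx * ((1+δ) * na + 2 * δ2 * nx) := by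
    have chain : (1-δ) * ∑ i, x i ^ 2 ≤ nx * (nh1 + nh2) := by
      calc (1-δ) * ∑ i, x i ^ 2 ≤ ∑ r, y r ^ 2 := hlow
        _ = ∑ i, x i * w1 i := by rw [sum_y2, sum_xg]
        _ ≤ nx * Real.sqrt (∑ i, w1 i ^ 2) := cs_x
        _ = nx * Real.sqrt (∑ i ∈ T, g i ^ 2) := by rw [hw1T]
        _ ≤ nx * Real.sqrt (∑ i ∈ T0, g i ^ 2) :=
            mul_le_mul_of_nonneg_left hmaxT hnxnn
        _ ≤ nx * (nh1 + nh2) := mul_le_mul_of_nonneg_left hM hnxnn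
    have hsum : nh1 + nh2 ≤ (1+δ) * na + 2 * δ2 * nx := by
      have hb2 : δ2 * nb ≤ δ2 * nx := mul_le_mul_of_nonneg_left hnbx hδ20
      linarith [bnd_h1, bnd_h2, hb2]
    calc (1-δ) * nx ^ 2 = (1-δ) * ∑ i, x i ^ 2 := by rw [hnxsq]
      _ ≤ nx * (nh1 + nh2) := chain
      _ ≤ nx * ((1+δ) * na + 2 * δ2 * nx) :=
          mul_le_mul_of_nonneg_left hsum hnxnn
  -- identify the goal quantities
  have hgoalr : l2norm (fun i : (T ∩ T0 : Finset (Fin N)) => x i.1) = na := by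
    unfold l2norm
    rw [← hna]
    congr 1
    calc ∑ i : (T ∩ T0 : Finset (Fin N)), x i.1 ^ 2
        = ∑ i ∈ T ∩ T0, x i ^ 2 := Finset.sum_coe_sort (T ∩ T0) (fun i => x i ^ 2)
      _ = ∑ i ∈ Finset.univ ∩ (T ∩ T0), x i ^ 2 := by rw [Finset.univ_inter]
      _ = ∑ i, if i ∈ T ∩ T0 then x i ^ 2 else 0 := (Finset.sum_ite_mem _ _ _).symm
      _ = ∑ i, a i ^ 2 := by
          refine Finset.sum_congr rfl fun i _ => ?_
          simp only [ha]
          split_ifs <;> ring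
  have hgoall : l2norm x = nx := hnx
  rw [hgoalr, hgoall]
  have hδpos : 0 < 1 + δ := by linarith
  rcases eq_or_lt_of_le hnxnn with h0 | hpos
  · rw [← h0, mul_zero]; exact hnann
  · rw [div_mul_eq_mul_div, div_le_iff₀ hδpos]
    have e : (1-δ) * nx ^ 2 = nx * ((1-δ) * nx) := by ring
    rw [e] at main
    have key := (mul_le_mul_iff_right₀ hpos).mp main
    linarith
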